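/- arXiv:1301.7542 — 2 statements merged into one kernel-verified Lean document; each statement's English description precedes it below -/
import Mathlib

section
/- Let G be a c-regular simple graph on n vertices (so m = cn/2 edges) chosen according to a vertex- and edge-symmetric random graph ensemble with i.i.d. edge weights with law μ on [1,q]. Then the expected number of pairs (s-t separating set X of size u, cut-set vector of Hamming weight v with total weight w) satisfies E[A(u,v,w)] = 2^{v+1} C(n−2,u−1) C(m,v) C(m−v,(cu−v)/2) [f(x)^v]_{x^w} / C(cn, cu), where f(x) = Σ_{i=1}^q μ(i)x^i. -/
open Finset Polynomial
open scoped Classical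

/-- The vertex of a half-edge: half-edges `0,…,nc−1`, vertex `x/c`. -/
def vtx (n c : ℕ) (hc : 0 < c) (x : Fin (n * c)) : Fin n :=
  ⟨x.1 / c, (Nat.div_lt_iff_lt_mul hc).mpr x.2⟩

/-- Perfect matchings of `N` half-edges: fixed-point-free involutions. -/
noncomputable def Matchings (N : ℕ) : Finset (Equiv.Perm (Fin N)) :=
  univ.filter (fun π => (∀ x, π x ≠ x) ∧ ∀ x, π (π x) = x)

/-- Crossing edges of the cut `(X, Xᶜ)` in the multigraph given by the matching
`π`: each edge is represented by its smaller half-edge. -/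
noncomputable def crossing (n c : ℕ) (hc : 0 < c) (π : Equiv.Perm (Fin (n * c)))
    (X : Finset (Fin n)) : Finset (Fin (n * c)) :=
  univ.filter (fun x => x < π x ∧ Xor' (vtx n c hc x ∈ X) (vtx n c hc (π x) ∈ X))

/-- `A(u,v,w)` for an instance `(π, wt)`: the number of pairs (cut vector of an
s-t separating set `X` of size `u`, corresponding cut-set vector), the cut-set
having Hamming weight `v` and total edge weight `w` (the weight of an edge is
the weight attached to its smaller half-edge). -/
noncomputable def AA (n c : ℕ) (hc : 0 < c) (s t : Fin n)
    (π : Equiv.Perm (Fin (n * c))) (wt : Fin (n * c) → ℕ) (u v w : ℕ) : ℕ :=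
  (univ.filter (fun X : Finset (Fin n) =>
      Xor' (s ∈ X) (t ∈ X) ∧ X.card = u ∧
      (crossing n c hc π X).card = v ∧
      ∑ x ∈ crossing n c hc π X, wt x = w)).card

section Core
variable {N : ℕ}

def IsM (π : Equiv.Perm (Fin N)) : Prop := (∀ x, π x ≠ x) ∧ ∀ x, π (π x) = x

noncomputable def crossE (π : Equiv.Perm (Fin N)) (R : Finset (Fin N)) : Finset (Fin N) :=
  univ.filter (fun x => x < π x ∧ Xor' (x ∈ R) (π x ∈ R))

noncomputable def fullE (π : Equiv.Perm (Fin N)) (R : Finset (Fin N)) : Finset (Fin N) :=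
  univ.filter (fun x => x < π x ∧ x ∈ R ∧ π x ∈ R)

noncomputable def edges (π : Equiv.Perm (Fin N)) : Finset (Fin N) :=
  univ.filter (fun x => x < π x)

lemma twofold (π : Equiv.Perm (Fin N)) (hπ : IsM π) (S : Finset (Fin N))
    (hS : ∀ x ∈ S, π x ∈ S) :
    S.card = 2 * (S.filter (fun x => x < π x)).card := by
  classical
  have hsplit := Finset.card_filter_add_card_filter_not
    (s := S) (p := fun x => x < π x)
  have hBA : (S.filter (fun x => ¬ x < π x)).card
      = (S.filter (fun x => x < π x)).card := by
    apply Finset.card_bij' (fun x _ => π x) (fun x _ => π x)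
    · intro a ha
      simp only [mem_filter] at ha ⊢
      have hne := hπ.1 a
      have h2 := hπ.2 a
      refine ⟨hS a ha.1, ?_⟩
      rw [h2]
      rcases lt_trichotomy a (π a) with h | h | h
      · exact absurd h ha.2
      · exact absurd h.symm hne
      · exact h
    · intro a ha
      simp only [mem_filter] at ha ⊢
      have h2 := hπ.2 a
      refine ⟨hS a ha.1, ?_⟩
      rw [h2]
      exact not_lt.mpr (le_of_lt ha.2)
    · intro a _; exact hπ.2 a
    · intro a _; exact hπ.2 a
  omega

lemma card_edges (π : Equiv.Perm (Fin N)) (hπ : IsM π) :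
    N = 2 * (edges π).card := by
  have := twofold π hπ univ (by simp)
  simpa [edges, Finset.card_univ] using this

lemma card_R (π : Equiv.Perm (Fin N)) (hπ : IsM π) (R : Finset (Fin N)) :
    R.card = (crossE π R).card + 2 * (fullE π R).card := by
  classical
  have hsplit := Finset.card_filter_add_card_filter_not
    (s := R) (p := fun x => π x ∈ R)
  -- R2 part
  have hR2 : (R.filter (fun x => π x ∈ R)).card = 2 * (fullE π R).card := by
    have hinv : ∀ x ∈ R.filter (fun x => π x ∈ R), π x ∈ R.filter (fun x => π x ∈ R) := by
      intro x hx
      simp only [mem_filter] at hx ⊢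
      exact ⟨hx.2, by rw [hπ.2 x]; exact hx.1⟩
    have := twofold π hπ _ hinv
    have heq : ((R.filter (fun x => π x ∈ R)).filter (fun x => x < π x)) = fullE π R := by
      ext x; simp only [fullE, mem_filter, mem_univ, true_and]
      tauto
    rw [heq] at this
    exact this
  -- R1 part
  have hR1 : (R.filter (fun x => ¬ π x ∈ R)).card = (crossE π R).card := by
    apply Finset.card_bij' (fun x _ => if x < π x then x else π x)
      (fun e _ => if e ∈ R then e else π e)
    · intro a ha
      simp only [mem_filter] at ha
      simp only [crossE, mem_filter, mem_univ, true_and]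
      by_cases h : a < π a
      · simp only [if_pos h]
        exact ⟨h, Or.inl ⟨ha.1, ha.2⟩⟩
      · simp only [if_neg h]
        have hlt : π a < a := by
          rcases lt_trichotomy a (π a) with h' | h' | h'
          · exact absurd h' h
          · exact absurd h'.symm (hπ.1 a)
          · exact h'
        rw [hπ.2 a]
        exact ⟨hlt, Or.inr ⟨ha.1, ha.2⟩⟩
    · intro e he
      simp only [crossE, mem_filter, mem_univ, true_and] at he
      simp only [mem_filter]
      rcases he.2 with ⟨h1, h2⟩ | ⟨h1, h2⟩
      · simp only [if_pos h1]; exact ⟨h1, h2⟩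
      · simp only [if_neg h2]
        rw [hπ.2 e]
        exact ⟨h1, h2⟩
    · intro a ha
      simp only [mem_filter] at ha
      by_cases h : a < π a
      · simp [if_pos h, ha.1]
      · simp only [if_neg h]
        rw [if_neg ha.2, hπ.2 a]
    · intro e he
      simp only [crossE, mem_filter, mem_univ, true_and] at he
      by_cases h : e ∈ R
      · simp only [if_pos h, if_pos he.1]
      · simp only [if_neg h]
        have hπe : ¬ π e < π (π e) := by
          rw [hπ.2 e]; exact not_lt.mpr (le_of_lt he.1)
        rw [if_neg hπe, hπ.2 e]
  omega


noncomputable def recon (π : Equiv.Perm (Fin N)) (C F T : Finset (Fin N)) : Finset (Fin N) :=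
  F ∪ F.image π ∪ T ∪ (C \ T).image π

lemma mem_recon_rep (π : Equiv.Perm (Fin N)) (hπ : IsM π) {C F T : Finset (Fin N)}
    (hC : ∀ x ∈ C, x < π x) (hF : ∀ x ∈ F, x < π x) (hT : T ⊆ C)
    {e : Fin N} (he : e < π e) :
    (e ∈ recon π C F T ↔ e ∈ F ∨ e ∈ T) ∧ (π e ∈ recon π C F T ↔ e ∈ F ∨ e ∈ C \ T) := by
  have hnotimg : ∀ (A : Finset (Fin N)), (∀ x ∈ A, x < π x) → e ∉ A.image π := by
    intro A hA h
    rcases Finset.mem_image.mp h with ⟨a, ha, hae⟩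
    have : π e < e := by rw [← hae, hπ.2 a]; exact hae ▸ hA a ha
    exact absurd he (not_lt.mpr (le_of_lt this))
  have hπe_not : ∀ (A : Finset (Fin N)), (∀ x ∈ A, x < π x) → π e ∉ A := by
    intro A hA h
    have := hA _ h
    rw [hπ.2 e] at this
    exact absurd he (not_lt.mpr (le_of_lt this))
  have himg : ∀ (A : Finset (Fin N)), (π e ∈ A.image π ↔ e ∈ A) := by
    intro A
    constructor
    · intro h
      rcases Finset.mem_image.mp h with ⟨a, ha, hae⟩
      have : a = e := π.injective hae
      exact this ▸ ha
    · intro h; exact Finset.mem_image.mpr ⟨e, h, rfl⟩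
  constructor
  · simp only [recon, Finset.mem_union]
    constructor
    · rintro (((h | h) | h) | h)
      · exact Or.inl h
      · exact absurd h (hnotimg F hF)
      · exact Or.inr h
      · exact absurd h (hnotimg _ (fun x hx => hC x (Finset.mem_sdiff.mp hx).1))
    · rintro (h | h)
      · exact Or.inl (Or.inl (Or.inl h))
      · exact Or.inl (Or.inr h)
  · simp only [recon, Finset.mem_union]
    constructor
    · rintro (((h | h) | h) | h)
      · exact absurd h (hπe_not F hF)
      · exact Or.inl ((himg F).mp h)
      · exact absurd h (hπe_not _ (fun x hx => hC x (hT hx)))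
      · exact Or.inr ((himg _).mp h)
    · rintro (h | h)
      · exact Or.inl (Or.inl (Or.inr ((himg F).mpr h)))
      · exact Or.inr ((himg _).mpr h)

lemma crossE_recon (π : Equiv.Perm (Fin N)) (hπ : IsM π) {C F T : Finset (Fin N)}
    (hC : ∀ x ∈ C, x < π x) (hF : ∀ x ∈ F, x < π x) (hT : T ⊆ C)
    (hFC : Disjoint F C) :
    crossE π (recon π C F T) = C := by
  ext x
  simp only [crossE, mem_filter, mem_univ, true_and]
  constructor
  · rintro ⟨hx, hxor⟩
    have hmem := mem_recon_rep π hπ hC hF hT hx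
    rw [hmem.1, hmem.2] at hxor
    rcases hxor with ⟨h1, h2⟩ | ⟨h1, h2⟩
    · rcases h1 with h1 | h1
      · exact absurd (Or.inl h1) h2
      · exact hT h1
    · rcases h1 with h1 | h1
      · exact absurd (Or.inl h1) h2
      · exact (Finset.mem_sdiff.mp h1).1
  · intro hxC
    have hx := hC x hxC
    have hmem := mem_recon_rep π hπ hC hF hT hx
    refine ⟨hx, ?_⟩
    rw [hmem.1, hmem.2]
    have hxF : x ∉ F := fun h => (Finset.disjoint_left.mp hFC h) hxC
    by_cases hxT : x ∈ T
    · exact Or.inl ⟨Or.inr hxT, by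
        rintro (h | h)
        · exact hxF h
        · exact (Finset.mem_sdiff.mp h).2 hxT⟩
    · exact Or.inr ⟨Or.inr (Finset.mem_sdiff.mpr ⟨hxC, hxT⟩), by
        rintro (h | h)
        · exact hxF h
        · exact hxT h⟩

lemma fullE_recon (π : Equiv.Perm (Fin N)) (hπ : IsM π) {C F T : Finset (Fin N)}
    (hC : ∀ x ∈ C, x < π x) (hF : ∀ x ∈ F, x < π x) (hT : T ⊆ C)
    (hFC : Disjoint F C) :
    fullE π (recon π C F T) = F := by
  ext x
  simp only [fullE, mem_filter, mem_univ, true_and]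
  constructor
  · rintro ⟨hx, h1, h2⟩
    have hmem := mem_recon_rep π hπ hC hF hT hx
    rw [hmem.1] at h1
    rw [hmem.2] at h2
    rcases h1 with h1 | h1
    · exact h1
    · rcases h2 with h2 | h2
      · exact h2
      · exact absurd h1 (Finset.mem_sdiff.mp h2).2
  · intro hxF
    have hx := hF x hxF
    have hmem := mem_recon_rep π hπ hC hF hT hx
    exact ⟨hx, hmem.1.mpr (Or.inl hxF), hmem.2.mpr (Or.inl hxF)⟩

lemma recon_eq_self (π : Equiv.Perm (Fin N)) (hπ : IsM π) (R : Finset (Fin N)) :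
    recon π (crossE π R) (fullE π R) (crossE π R ∩ R) = R := by
  classical
  set C := crossE π R
  set F := fullE π R
  have hC : ∀ x ∈ C, x < π x := by
    intro x hx; exact ((Finset.mem_filter.mp hx).2).1
  have hF : ∀ x ∈ F, x < π x := by
    intro x hx; exact ((Finset.mem_filter.mp hx).2).1
  have hT : C ∩ R ⊆ C := Finset.inter_subset_left
  ext x
  rcases lt_trichotomy x (π x) with hx | hx | hx
  · have hmem := (mem_recon_rep π hπ hC hF hT hx).1
    rw [hmem]
    constructor
    · rintro (h | h)
      · exact ((Finset.mem_filter.mp h).2).2.1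
      · exact (Finset.mem_inter.mp h).2
    · intro hxR
      by_cases hπx : π x ∈ R
      · exact Or.inl (by simp only [F, fullE, mem_filter, mem_univ, true_and]; exact ⟨hx, hxR, hπx⟩)
      · refine Or.inr (Finset.mem_inter.mpr ⟨?_, hxR⟩)
        simp only [C, crossE, mem_filter, mem_univ, true_and]
        exact ⟨hx, Or.inl ⟨hxR, hπx⟩⟩
  · exact absurd hx.symm (hπ.1 x)
  · -- x = π e with e = π x
    set e := π x with hedef
    have hπe : π e = x := hπ.2 x
    have he : e < π e := by rw [hπe]; exact hx
    have hmem := (mem_recon_rep π hπ hC hF hT he).2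
    rw [hπe] at hmem
    rw [hmem]
    constructor
    · rintro (h | h)
      · have := ((Finset.mem_filter.mp h).2).2.2
        rwa [hπe] at this
      · rcases Finset.mem_sdiff.mp h with ⟨h1, h2⟩
        have hxor := ((Finset.mem_filter.mp h1).2).2
        rw [hπe] at hxor
        rcases hxor with ⟨h3, h4⟩ | ⟨h3, h4⟩
        · exact absurd (Finset.mem_inter.mpr ⟨h1, h3⟩) h2
        · exact h3
    · intro hxR
      by_cases heR : e ∈ R
      · exact Or.inl (by
          simp only [F, fullE, mem_filter, mem_univ, true_and]
          exact ⟨he, heR, by rwa [hπe]⟩)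
      · refine Or.inr (Finset.mem_sdiff.mpr ⟨?_, ?_⟩)
        · simp only [C, crossE, mem_filter, mem_univ, true_and]
          exact ⟨he, Or.inr ⟨by rwa [hπe], heR⟩⟩
        · intro h
          exact heR (Finset.mem_inter.mp h).2

lemma inter_recon (π : Equiv.Perm (Fin N)) (hπ : IsM π) {C F T : Finset (Fin N)}
    (hC : ∀ x ∈ C, x < π x) (hF : ∀ x ∈ F, x < π x) (hT : T ⊆ C)
    (hFC : Disjoint F C) :
    C ∩ recon π C F T = T := by
  ext x
  constructor
  · intro h
    rcases Finset.mem_inter.mp h with ⟨hxC, hxr⟩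
    have hmem := (mem_recon_rep π hπ hC hF hT (hC x hxC)).1
    rcases hmem.mp hxr with h1 | h1
    · exact absurd hxC (Finset.disjoint_left.mp hFC h1)
    · exact h1
  · intro h
    refine Finset.mem_inter.mpr ⟨hT h, ?_⟩
    exact (mem_recon_rep π hπ hC hF hT (hC x (hT h))).1.mpr (Or.inr h)

lemma crossE_subset_edges (π : Equiv.Perm (Fin N)) (R : Finset (Fin N)) :
    crossE π R ⊆ edges π := by
  intro x hx
  simp only [crossE, edges, mem_filter, mem_univ, true_and] at *
  exact hx.1

lemma fullE_subset_edges (π : Equiv.Perm (Fin N)) (R : Finset (Fin N)) :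
    fullE π R ⊆ edges π := by
  intro x hx
  simp only [fullE, edges, mem_filter, mem_univ, true_and] at *
  exact hx.1

lemma fullE_disjoint_crossE (π : Equiv.Perm (Fin N)) (R : Finset (Fin N)) :
    Disjoint (fullE π R) (crossE π R) := by
  rw [Finset.disjoint_left]
  intro x hx hx'
  simp only [fullE, crossE, mem_filter, mem_univ, true_and] at hx hx'
  rcases hx'.2 with ⟨h1, h2⟩ | ⟨h1, h2⟩
  · exact h2 hx.2.2
  · exact h2 hx.2.1

lemma lemA {m : ℕ} (hm : 2 * m = N) (π : Equiv.Perm (Fin N)) (hπ : IsM π) (r v : ℕ) :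
    (((univ : Finset (Fin N)).powersetCard r).filter
      (fun R => (crossE π R).card = v)).card
    = if v ≤ r ∧ (r - v) % 2 = 0 then
        2 ^ v * m.choose v * (m - v).choose ((r - v) / 2) else 0 := by
  classical
  have hedges : (edges π).card = m := by
    have := card_edges π hπ; omega
  by_cases hcond : v ≤ r ∧ (r - v) % 2 = 0
  swap
  · rw [if_neg hcond]
    rw [Finset.card_eq_zero, Finset.eq_empty_iff_forall_notMem]
    intro R hR
    simp only [mem_filter, Finset.mem_powersetCard] at hR
    have hcr := card_R π hπ R
    rw [hR.1.2, hR.2] at hcr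
    exact hcond ⟨by omega, by omega⟩
  rw [if_pos hcond]
  obtain ⟨hvr, hpar⟩ := hcond
  set f := (r - v) / 2 with hf
  have hrf : r = v + 2 * f := by omega
  set T := (((univ : Finset (Fin N)).powersetCard r).filter
      (fun R => (crossE π R).card = v)) with hT
  have step1 : T.card = ∑ C ∈ (edges π).powersetCard v,
      (T.filter (fun R => crossE π R = C)).card := by
    apply Finset.card_eq_sum_card_fiberwise
    intro R hR
    simp only [hT, Finset.mem_coe, mem_filter] at hR
    exact Finset.mem_powersetCard.mpr ⟨crossE_subset_edges π R, hR.2⟩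
  rw [step1]
  have step2 : ∀ C ∈ (edges π).powersetCard v,
      (T.filter (fun R => crossE π R = C)).card = 2 ^ v * (m - v).choose f := by
    intro C hC
    rcases Finset.mem_powersetCard.mp hC with ⟨hCsub, hCcard⟩
    have hCe : ∀ x ∈ C, x < π x := by
      intro x hx
      have := hCsub hx
      simpa [edges] using this
    have step2a : (T.filter (fun R => crossE π R = C)).card
        = ∑ F ∈ ((edges π) \ C).powersetCard f,
          ((T.filter (fun R => crossE π R = C)).filter (fun R => fullE π R = F)).card := by
      apply Finset.card_eq_sum_card_fiberwise
      intro R hR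
      simp only [hT, Finset.mem_coe, mem_filter, Finset.mem_powersetCard] at hR
      obtain ⟨⟨⟨_, hRcard⟩, hcv⟩, hcC⟩ := hR
      refine Finset.mem_powersetCard.mpr ⟨?_, ?_⟩
      · intro x hx
        refine Finset.mem_sdiff.mpr ⟨fullE_subset_edges π R hx, ?_⟩
        rw [← hcC]
        exact fun h => Finset.disjoint_left.mp (fullE_disjoint_crossE π R) hx h
      · have := card_R π hπ R
        rw [hRcard, hcv] at this
        omega
    rw [step2a]
    have step2b : ∀ F ∈ ((edges π) \ C).powersetCard f,
        ((T.filter (fun R => crossE π R = C)).filter (fun R => fullE π R = F)).card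
          = 2 ^ v := by
      intro F hF
      rcases Finset.mem_powersetCard.mp hF with ⟨hFsub, hFcard⟩
      have hFe : ∀ x ∈ F, x < π x := by
        intro x hx
        have := (Finset.mem_sdiff.mp (hFsub hx)).1
        simpa [edges] using this
      have hFC : Disjoint F C := by
        rw [Finset.disjoint_left]
        intro x hx
        exact (Finset.mem_sdiff.mp (hFsub hx)).2
      have hbij : ((T.filter (fun R => crossE π R = C)).filter
          (fun R => fullE π R = F)).card = C.powerset.card := by
        apply Finset.card_bij' (fun R _ => C ∩ R) (fun T' _ => recon π C F T')
        · intro R _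
          exact Finset.mem_powerset.mpr Finset.inter_subset_left
        · intro T' hT'
          have hT'sub : T' ⊆ C := Finset.mem_powerset.mp hT'
          have hcr := crossE_recon π hπ hCe hFe hT'sub hFC
          have hfr := fullE_recon π hπ hCe hFe hT'sub hFC
          have h1 : (recon π C F T').card = r := by
            have := card_R π hπ (recon π C F T')
            rw [hcr, hfr, hCcard, hFcard] at this
            omega
          refine Finset.mem_filter.mpr ⟨Finset.mem_filter.mpr ⟨?_, hcr⟩, hfr⟩
          rw [hT]
          exact Finset.mem_filter.mpr ⟨Finset.mem_powersetCard.mpr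
            ⟨Finset.subset_univ _, h1⟩, by rw [hcr, hCcard]⟩
        · intro R hR
          simp only [hT, mem_filter] at hR
          obtain ⟨⟨_, hcC⟩, hcF⟩ := hR
          rw [← hcC, ← hcF, recon_eq_self π hπ R]
        · intro T' hT'
          exact inter_recon π hπ hCe hFe (Finset.mem_powerset.mp hT') hFC
      rw [hbij, Finset.card_powerset, hCcard]
    rw [Finset.sum_congr rfl step2b, Finset.sum_const, Finset.card_powersetCard,
      Finset.card_sdiff_of_subset hCsub, hedges, hCcard, smul_eq_mul, mul_comm]
  rw [Finset.sum_congr rfl step2, Finset.sum_const, Finset.card_powersetCard, hedges,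
    smul_eq_mul]
  ring

noncomputable def crossAll (π : Equiv.Perm (Fin N)) (R : Finset (Fin N)) : Finset (Fin N) :=
  univ.filter (fun x => Xor' (x ∈ R) (π x ∈ R))

lemma card_crossAll (π : Equiv.Perm (Fin N)) (hπ : IsM π) (R : Finset (Fin N)) :
    (crossAll π R).card = 2 * (crossE π R).card := by
  have hinv : ∀ x ∈ crossAll π R, π x ∈ crossAll π R := by
    intro x hx
    simp only [crossAll, mem_filter, mem_univ, true_and] at hx ⊢
    rw [hπ.2 x]
    exact hx.symm
  have := twofold π hπ _ hinv
  have heq : (crossAll π R).filter (fun x => x < π x) = crossE π R := by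
    ext x
    simp only [crossAll, crossE, mem_filter, mem_univ, true_and]
    tauto
  rw [heq] at this
  exact this

lemma exists_perm_mapsTo (R R' : Finset (Fin N)) (h : R.card = R'.card) :
    ∃ σ : Equiv.Perm (Fin N), ∀ x, σ x ∈ R' ↔ x ∈ R := by
  classical
  have hcompl : Rᶜ.card = R'ᶜ.card := by
    rw [Finset.card_compl, Finset.card_compl, h]
  have e1 : {x // x ∈ R} ≃ {x // x ∈ R'} := Finset.equivOfCardEq h
  have e2 : {x : Fin N // ¬ x ∈ R} ≃ {x : Fin N // ¬ x ∈ R'} :=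
    (Equiv.subtypeEquivRight (fun x => (Finset.mem_compl).symm)).trans
      ((Finset.equivOfCardEq hcompl).trans (Equiv.subtypeEquivRight (fun x => Finset.mem_compl)))
  refine ⟨Equiv.subtypeCongr e1 e2, fun x => ?_⟩
  by_cases hx : x ∈ R
  · simp only [Equiv.subtypeCongr, Equiv.trans_apply, Equiv.sumCompl_symm_apply_of_pos hx,
      Equiv.sumCongr_apply, Sum.map_inl, Equiv.sumCompl_apply_inl]
    exact iff_of_true (e1 ⟨x, hx⟩).2 hx
  · simp only [Equiv.subtypeCongr, Equiv.trans_apply, Equiv.sumCompl_symm_apply_of_neg hx,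
      Equiv.sumCongr_apply, Sum.map_inr, Equiv.sumCompl_apply_inr]
    exact iff_of_false (e2 ⟨x, hx⟩).2 hx

lemma conj_isM (π σ : Equiv.Perm (Fin N)) (hπ : IsM π) : IsM (σ * π * σ⁻¹) := by
  constructor
  · intro x h
    simp only [Equiv.Perm.mul_apply] at h
    apply hπ.1 (σ⁻¹ x)
    calc π (σ⁻¹ x) = σ⁻¹ (σ (π (σ⁻¹ x))) := by rw [Equiv.Perm.coe_inv, Equiv.symm_apply_apply]
    _ = σ⁻¹ x := by rw [h]
  · intro x
    simp only [Equiv.Perm.mul_apply]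
    rw [Equiv.Perm.coe_inv, Equiv.symm_apply_apply, hπ.2]
    simp

lemma crossAll_conj (π σ : Equiv.Perm (Fin N)) (R R' : Finset (Fin N))
    (hσ : ∀ x, σ x ∈ R' ↔ x ∈ R) :
    crossAll (σ * π * σ⁻¹) R' = (crossAll π R).image σ := by
  have hσ' : ∀ x, x ∈ R' ↔ σ⁻¹ x ∈ R := by
    intro x
    conv_lhs => rw [show x = σ (σ⁻¹ x) by simp]
    exact hσ _
  ext x
  have h1 : x ∈ (crossAll π R).image σ ↔ σ⁻¹ x ∈ crossAll π R := by
    constructor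
    · intro h
      rcases Finset.mem_image.mp h with ⟨a, ha, rfl⟩
      simpa using ha
    · intro h
      exact Finset.mem_image.mpr ⟨σ⁻¹ x, h, by simp⟩
  rw [h1]
  simp only [crossAll, mem_filter, mem_univ, true_and]
  simp only [Equiv.Perm.mul_apply]
  rw [hσ' x, hσ' (σ (π (σ⁻¹ x))), Equiv.Perm.coe_inv, Equiv.symm_apply_apply]

lemma mem_Matchings {N : ℕ} (π : Equiv.Perm (Fin N)) : π ∈ Matchings N ↔ IsM π := by
  simp [Matchings, IsM, Finset.mem_filter]

lemma lemB {N : ℕ} (R R' : Finset (Fin N)) (h : R.card = R'.card) (v : ℕ) :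
    ((Matchings N).filter (fun π => (crossE π R).card = v)).card
    = ((Matchings N).filter (fun π => (crossE π R').card = v)).card := by
  classical
  obtain ⟨σ, hσ⟩ := exists_perm_mapsTo R R' h
  have key : ∀ (τ : Equiv.Perm (Fin N)) (S S' : Finset (Fin N)),
      (∀ x, τ x ∈ S' ↔ x ∈ S) → ∀ π ∈ (Matchings N).filter (fun π => (crossE π S).card = v),
      τ * π * τ⁻¹ ∈ (Matchings N).filter (fun π => (crossE π S').card = v) := by
    intro τ S S' hτ π hπ
    rcases Finset.mem_filter.mp hπ with ⟨hπM, hπc⟩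
    have hπM' := (mem_Matchings π).mp hπM
    have hconj := conj_isM π τ hπM'
    refine Finset.mem_filter.mpr ⟨(mem_Matchings _).mpr hconj, ?_⟩
    have h1 := card_crossAll (τ * π * τ⁻¹) hconj S'
    have h2 := card_crossAll π hπM' S
    rw [crossAll_conj π τ S S' hτ, Finset.card_image_of_injective _ τ.injective] at h1
    omega
  have hσ' : ∀ x, σ⁻¹ x ∈ R ↔ x ∈ R' := by
    intro x
    conv_rhs => rw [show x = σ (σ⁻¹ x) by simp]
    exact (hσ _).symm
  apply Finset.card_bij' (fun π _ => σ * π * σ⁻¹) (fun π _ => σ⁻¹ * π * σ)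
  · exact fun π hπ => key σ R R' hσ π hπ
  · intro π hπ
    have := key σ⁻¹ R' R hσ' π hπ
    simpa using this
  · intro π _
    ext x
    simp [Equiv.Perm.mul_apply]
  · intro π _
    ext x
    simp [Equiv.Perm.mul_apply]

lemma lemD {N m : ℕ} (hm : 2 * m = N) (r v : ℕ) (R : Finset (Fin N)) (hR : R.card = r) :
    ((Matchings N).filter (fun π => (crossE π R).card = v)).card * (N.choose r)
    = (Matchings N).card *
      (if v ≤ r ∧ (r - v) % 2 = 0 then
        2 ^ v * m.choose v * (m - v).choose ((r - v) / 2) else 0) := by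
  classical
  have swap :
      ∑ π ∈ Matchings N, (((univ : Finset (Fin N)).powersetCard r).filter
        (fun R' => (crossE π R').card = v)).card
      = ∑ R' ∈ (univ : Finset (Fin N)).powersetCard r,
          ((Matchings N).filter (fun π => (crossE π R').card = v)).card := by
    simp only [Finset.card_filter]
    rw [Finset.sum_comm]
  have lhs_eq : ∑ π ∈ Matchings N, (((univ : Finset (Fin N)).powersetCard r).filter
        (fun R' => (crossE π R').card = v)).card
      = (Matchings N).card *
        (if v ≤ r ∧ (r - v) % 2 = 0 then
          2 ^ v * m.choose v * (m - v).choose ((r - v) / 2) else 0) := by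
    rw [Finset.sum_congr rfl (fun π hπ => lemA hm π ((mem_Matchings π).mp hπ) r v),
      Finset.sum_const, smul_eq_mul]
  have rhs_eq : ∑ R' ∈ (univ : Finset (Fin N)).powersetCard r,
        ((Matchings N).filter (fun π => (crossE π R').card = v)).card
      = (N.choose r) * ((Matchings N).filter (fun π => (crossE π R).card = v)).card := by
    rw [Finset.sum_congr rfl (fun R' hR' => lemB R' R
        (by rw [hR, (Finset.mem_powersetCard.mp hR').2]) v),
      Finset.sum_const, smul_eq_mul, Finset.card_powersetCard, Finset.card_univ,
      Fintype.card_fin]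
  rw [mul_comm]
  rw [← lhs_eq, swap, rhs_eq]

lemma wlemma (N q w : ℕ) (μ : ℕ → ℝ) (hμ1 : ∑ i ∈ Finset.Icc 1 q, μ i = 1)
    (S : Finset (Fin N)) :
    ∑ wt ∈ Fintype.piFinset (fun _ : Fin N => Finset.Icc 1 q),
      (∏ x, μ (wt x)) * (if ∑ x ∈ S, wt x = w then (1:ℝ) else 0)
    = ((∑ i ∈ Finset.Icc 1 q, Polynomial.C (μ i) * Polynomial.X ^ i) ^ S.card).coeff w := by
  classical
  set f : Polynomial ℝ := ∑ i ∈ Finset.Icc 1 q, Polynomial.C (μ i) * Polynomial.X ^ i with hf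
  have key : (∏ x : Fin N, ∑ i ∈ Finset.Icc 1 q,
      Polynomial.C (μ i) * (if x ∈ S then Polynomial.X ^ i else 1)) = f ^ S.card := by
    have hg : ∀ x : Fin N, (∑ i ∈ Finset.Icc 1 q,
        Polynomial.C (μ i) * (if x ∈ S then Polynomial.X ^ i else 1))
        = if x ∈ S then f else 1 := by
      intro x
      by_cases hx : x ∈ S
      · simp [hx, hf]
      · simp only [hx, if_false, mul_one]
        rw [← Polynomial.C_1, ← hμ1, map_sum]
    rw [Finset.prod_congr rfl (fun x _ => hg x)]
    rw [Finset.prod_ite_mem univ S (fun _ => f), Finset.univ_inter, Finset.prod_const]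
  rw [← key, Finset.prod_univ_sum]
  rw [Polynomial.finset_sum_coeff]
  apply Finset.sum_congr rfl
  intro wt _
  have h1 : (∏ x : Fin N, Polynomial.C (μ (wt x)) * (if x ∈ S then Polynomial.X ^ (wt x) else 1))
      = Polynomial.C (∏ x, μ (wt x)) * Polynomial.X ^ (∑ x ∈ S, wt x) := by
    rw [Finset.prod_mul_distrib, ← map_prod]
    congr 1
    rw [Finset.prod_ite_mem univ S (fun x => Polynomial.X ^ (wt x)), Finset.univ_inter,
      Finset.prod_pow_eq_pow_sum]
  rw [h1, Polynomial.coeff_C_mul, Polynomial.coeff_X_pow]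
  by_cases h : ∑ x ∈ S, wt x = w
  · simp [h]
  · simp [h, Ne.symm h]

lemma matchings_nonempty {N m : ℕ} (hm : 2 * m = N) (hm1 : 1 ≤ m) :
    (Matchings N).Nonempty := by
  haveI : NeZero N := ⟨by omega⟩
  set a : Fin N := ⟨m, by omega⟩ with ha
  have haa : a + a = 0 := by
    apply Fin.ext
    rw [Fin.val_add]
    simp only [ha]
    have : m + m = N := by omega
    rw [this, Nat.mod_self]
    rfl
  refine ⟨Equiv.addLeft a, ?_⟩
  rw [mem_Matchings]
  constructor
  · intro x h
    simp only [Equiv.coe_addLeft] at h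
    have : a = 0 := by
      have := add_right_cancel (b := x) (a := a) (c := 0) (by simpa using h)
      exact this
    have : (⟨m, by omega⟩ : Fin N) = 0 := this
    have hm0 : m = 0 := by
      have := congrArg Fin.val this
      simpa using this
    omega
  · intro x
    simp only [Equiv.coe_addLeft]
    rw [← add_assoc, haa, zero_add]

lemma countX_half (n u : ℕ) (s t : Fin n) (hst : s ≠ t) (hu1 : 1 ≤ u) :
    ((univ : Finset (Finset (Fin n))).filter
      (fun X => (s ∈ X ∧ t ∉ X) ∧ X.card = u)).card = (n - 2).choose (u - 1) := by
  classical
  have hcard : ((univ : Finset (Fin n)) \ {s, t}).card = n - 2 := by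
    rw [Finset.card_sdiff_of_subset (by simp), Finset.card_univ, Fintype.card_fin]
    have : ({s, t} : Finset (Fin n)).card = 2 := by
      rw [Finset.card_insert_of_notMem (by simp [hst]), Finset.card_singleton]
    rw [this]
  rw [← hcard, ← Finset.card_powersetCard (u - 1) _]
  refine Finset.card_bij' (fun X _ => X.erase s) (fun Y _ => insert s Y) ?hi ?hj ?li ?ri
  case hi =>
    intro X hX
    simp only [mem_filter, mem_univ, true_and] at hX
    obtain ⟨⟨hs, ht⟩, hc⟩ := hX
    refine Finset.mem_powersetCard.mpr ⟨?_, ?_⟩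
    · intro x hx
      rcases Finset.mem_erase.mp hx with ⟨hxs, hxX⟩
      refine Finset.mem_sdiff.mpr ⟨Finset.mem_univ x, ?_⟩
      simp only [Finset.mem_insert, Finset.mem_singleton]
      rintro (rfl | rfl)
      · exact hxs rfl
      · exact ht hxX
    · rw [Finset.card_erase_of_mem hs, hc]
  case hj =>
    intro Y hY
    rcases Finset.mem_powersetCard.mp hY with ⟨hsub, hYc⟩
    have hsY : s ∉ Y := by
      intro h
      have := hsub h
      simp at this
    have htY : t ∉ Y := by
      intro h
      have := hsub h
      simp at this
    simp only [mem_filter, mem_univ, true_and]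
    refine ⟨⟨Finset.mem_insert_self s Y, ?_⟩, ?_⟩
    · simp only [Finset.mem_insert]
      rintro (h | h)
      · exact hst h.symm
      · exact htY h
    · rw [Finset.card_insert_of_notMem hsY, hYc]
      omega
  case li =>
    intro X hX
    simp only [mem_filter, mem_univ, true_and] at hX
    exact Finset.insert_erase hX.1.1
  case ri =>
    intro Y hY
    rcases Finset.mem_powersetCard.mp hY with ⟨hsub, _⟩
    apply Finset.erase_insert
    intro h
    have := hsub h
    simp at this

lemma countX (n u : ℕ) (s t : Fin n) (hst : s ≠ t) (hu1 : 1 ≤ u) :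
    ((univ : Finset (Finset (Fin n))).filter
      (fun X => Xor' (s ∈ X) (t ∈ X) ∧ X.card = u)).card = 2 * (n - 2).choose (u - 1) := by
  classical
  have hsplit : (univ : Finset (Finset (Fin n))).filter
      (fun X => Xor' (s ∈ X) (t ∈ X) ∧ X.card = u)
      = ((univ : Finset (Finset (Fin n))).filter (fun X => (s ∈ X ∧ t ∉ X) ∧ X.card = u))
        ∪ ((univ : Finset (Finset (Fin n))).filter (fun X => (t ∈ X ∧ s ∉ X) ∧ X.card = u)) := by
    ext X
    simp only [mem_filter, Finset.mem_union, mem_univ, true_and]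
    simp only [Xor', Xor]
    tauto
  rw [hsplit, Finset.card_union_of_disjoint]
  · rw [countX_half n u s t hst hu1, countX_half n u t s hst.symm hu1]
    have hsym : ({s, t} : Finset (Fin n)) = {t, s} := by
      ext x; simp [or_comm]
    omega
  · rw [Finset.disjoint_left]
    intro X hX hX'
    simp only [mem_filter, mem_univ, true_and] at hX hX'
    exact hX'.1.2 hX.1.1

lemma crossing_eq_crossE (n c : ℕ) (hc : 0 < c) (π : Equiv.Perm (Fin (n * c)))
    (X : Finset (Fin n)) :
    crossing n c hc π X = crossE π (univ.filter (fun x => vtx n c hc x ∈ X)) := by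
  ext x
  simp only [crossing, crossE, mem_filter, mem_univ, true_and]

lemma card_R0 (n c u : ℕ) (hc : 0 < c) (X : Finset (Fin n)) (hX : X.card = u) :
    ((univ : Finset (Fin (n * c))).filter (fun x => vtx n c hc x ∈ X)).card = c * u := by
  classical
  rw [Finset.card_eq_sum_card_fiberwise (f := vtx n c hc) (t := X)
    (s := univ.filter (fun x => vtx n c hc x ∈ X))
    (fun x hx => Finset.mem_coe.mpr (Finset.mem_filter.mp (Finset.mem_coe.mp hx)).2)]
  have hfib : ∀ y ∈ X, ((univ.filter (fun x => vtx n c hc x ∈ X)).filter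
      (fun x => vtx n c hc x = y)).card = c := by
    intro y hy
    have heq : (univ.filter (fun x => vtx n c hc x ∈ X)).filter (fun x => vtx n c hc x = y)
        = univ.filter (fun x => vtx n c hc x = y) := by
      ext x
      simp only [mem_filter, mem_univ, true_and]
      constructor
      · rintro ⟨_, h⟩; exact h
      · intro h; exact ⟨h ▸ hy, h⟩
    rw [heq]
    have hbij : (univ.filter (fun x => vtx n c hc x = y)).card
        = (univ : Finset (Fin c)).card := by
      refine Finset.card_bij' (fun x _ => (⟨x.1 % c, Nat.mod_lt _ hc⟩ : Fin c))
        (fun j _ => (⟨y.1 * c + j.1, by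
          have h1 : y.1 + 1 ≤ n := y.2
          have h2 : j.1 < c := j.2
          calc y.1 * c + j.1 < y.1 * c + c := by omega
          _ = (y.1 + 1) * c := by ring
          _ ≤ n * c := Nat.mul_le_mul_right c h1⟩ : Fin (n * c))) ?hi ?hj ?li ?ri
      case hi =>
        intro x _
        exact Finset.mem_univ _
      case hj =>
        intro j _
        simp only [mem_filter, mem_univ, true_and]
        apply Fin.ext
        show (y.1 * c + j.1) / c = y.1
        rw [mul_comm, Nat.mul_add_div hc, Nat.div_eq_of_lt j.2]
        omega
      case li =>
        intro x hx
        simp only [mem_filter, mem_univ, true_and] at hx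
        have h1 : x.1 / c = y.1 := congrArg Fin.val hx
        apply Fin.ext
        show y.1 * c + x.1 % c = x.1
        have h2 := Nat.div_add_mod x.1 c
        rw [h1] at h2
        rw [mul_comm]
        omega
      case ri =>
        intro j _
        apply Fin.ext
        show (y.1 * c + j.1) % c = j.1
        rw [mul_comm, Nat.mul_add_mod, Nat.mod_eq_of_lt j.2]
    simpa using hbij
  rw [Finset.sum_congr rfl hfib, Finset.sum_const, smul_eq_mul, hX, mul_comm]

/-- Expected `A(u,v,w)` over the `c`-regular configuration-model ensemble
(uniform perfect matching of the `nc` half-edges, i.i.d. edge weights with law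
`μ` on `[1,q]`):
`E[A(u,v,w)] = 2^{v+1} C(n−2,u−1) C(m,v) C(m−v,(cu−v)/2) [f^v]_{x^w} / C(cn,cu)`,
with `f(x) = Σ_{i=1}^q μ(i) x^i`, `m = cn/2`, and the binomial coefficient
`C(m−v,(cu−v)/2)` interpreted as `0` unless `(cu−v)/2` is a nonnegative
integer. -/
theorem stmt14 (n c q m : ℕ) (hc : 0 < c) (hm : 2 * m = n * c) (hq : 1 ≤ q)
    (μ : ℕ → ℝ) (hμ0 : ∀ i ∈ Finset.Icc 1 q, 0 ≤ μ i)
    (hμ1 : ∑ i ∈ Finset.Icc 1 q, μ i = 1)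
    (s t : Fin n) (hst : s ≠ t)
    (u v w : ℕ) (hu1 : 1 ≤ u) (hu2 : u ≤ n - 1) (hv : v ≤ m) :
    (∑ π ∈ Matchings (n * c),
      ∑ wt ∈ Fintype.piFinset (fun _ : Fin (n * c) => Finset.Icc 1 q),
        ((Matchings (n * c)).card : ℝ)⁻¹ * (∏ x, μ (wt x)) *
          (AA n c hc s t π wt u v w : ℝ))
    = 2 ^ (v + 1) * (Nat.choose (n - 2) (u - 1) : ℝ) * (Nat.choose m v : ℝ) *
        (if v ≤ c * u ∧ (c * u - v) % 2 = 0 then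
          (Nat.choose (m - v) ((c * u - v) / 2) : ℝ) else 0) *
        (((∑ i ∈ Finset.Icc 1 q, Polynomial.C (μ i) * Polynomial.X ^ i) ^ v).coeff w)
      / (Nat.choose (n * c) (c * u) : ℝ) := by
  classical
  set f : Polynomial ℝ := ∑ i ∈ Finset.Icc 1 q, Polynomial.C (μ i) * Polynomial.X ^ i with hfdef
  set sepu : Finset (Finset (Fin n)) :=
    univ.filter (fun X : Finset (Fin n) => Xor' (s ∈ X) (t ∈ X) ∧ X.card = u) with hsepu
  have hn : 2 ≤ n := by
    have h1 := s.2
    have h2 := t.2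
    have h3 : s.1 ≠ t.1 := fun h => hst (Fin.ext h)
    omega
  have hm1 : 1 ≤ m := by
    have : 2 * 1 ≤ n * c := Nat.mul_le_mul hn hc
    omega
  have hMne : (Matchings (n * c)).Nonempty := matchings_nonempty hm hm1
  have hMcard : (0:ℝ) < ((Matchings (n * c)).card : ℝ) := by
    exact_mod_cast Finset.card_pos.mpr hMne
  have hcu : c * u ≤ n * c := by
    calc c * u ≤ c * n := Nat.mul_le_mul_left c (by omega)
    _ = n * c := mul_comm c n
  have hchoose : (0:ℝ) < (((n * c).choose (c * u)) : ℝ) := by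
    exact_mod_cast Nat.choose_pos hcu
  -- expand AA
  have hAA : ∀ (π : Equiv.Perm (Fin (n * c))) (wt : Fin (n * c) → ℕ),
      (AA n c hc s t π wt u v w : ℝ)
      = ∑ X ∈ sepu,
          (if (crossing n c hc π X).card = v then
            (if ∑ x ∈ crossing n c hc π X, wt x = w then (1:ℝ) else 0) else 0) := by
    intro π wt
    have hfil : (univ.filter (fun X : Finset (Fin n) =>
        Xor' (s ∈ X) (t ∈ X) ∧ X.card = u ∧ (crossing n c hc π X).card = v ∧
          ∑ x ∈ crossing n c hc π X, wt x = w))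
        = sepu.filter
            (fun X => (crossing n c hc π X).card = v ∧
              ∑ x ∈ crossing n c hc π X, wt x = w) := by
      rw [hsepu, Finset.filter_filter]
      apply Finset.filter_congr
      intro X _
      tauto
    rw [AA, hfil, Finset.card_filter]
    push_cast
    apply Finset.sum_congr rfl
    intro X _
    by_cases h1 : (crossing n c hc π X).card = v <;>
      by_cases h2 : ∑ x ∈ crossing n c hc π X, wt x = w <;> simp [h1, h2]
  -- per (π, X): the weight sum
  have hwt : ∀ (π : Equiv.Perm (Fin (n * c))) (X : Finset (Fin n)),
      (∑ wt ∈ Fintype.piFinset (fun _ : Fin (n * c) => Finset.Icc 1 q),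
        ((Matchings (n * c)).card : ℝ)⁻¹ * (∏ x, μ (wt x)) *
          (if (crossing n c hc π X).card = v then
            (if ∑ x ∈ crossing n c hc π X, wt x = w then (1:ℝ) else 0) else 0))
      = ((Matchings (n * c)).card : ℝ)⁻¹ *
          (if (crossing n c hc π X).card = v then ((f ^ v).coeff w) else 0) := by
    intro π X
    by_cases hC : (crossing n c hc π X).card = v
    · simp only [if_pos hC]
      have := wlemma (n * c) q w μ hμ1 (crossing n c hc π X)
      rw [hC] at this
      rw [← hfdef] at this
      rw [← this, Finset.mul_sum]
      apply Finset.sum_congr rfl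
      intro wt _
      ring
    · simp [hC]
  -- per X : the matching sum
  have hmatch : ∀ X ∈ sepu,
      (∑ π ∈ Matchings (n * c),
        ((Matchings (n * c)).card : ℝ)⁻¹ *
          (if (crossing n c hc π X).card = v then ((f ^ v).coeff w) else 0))
      = ((f ^ v).coeff w) *
          (((if v ≤ c * u ∧ (c * u - v) % 2 = 0 then
            2 ^ v * m.choose v * (m - v).choose ((c * u - v) / 2) else 0 : ℕ)) : ℝ)
          / (((n * c).choose (c * u)) : ℝ) := by
    intro X hX
    have hXcard : X.card = u := by
      rw [hsepu] at hX
      exact (Finset.mem_filter.mp hX).2.2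
    set R0 : Finset (Fin (n * c)) := univ.filter (fun x => vtx n c hc x ∈ X) with hR0
    have hR0card : R0.card = c * u := card_R0 n c u hc X hXcard
    have hcrosseq : ∀ π : Equiv.Perm (Fin (n * c)),
        crossing n c hc π X = crossE π R0 := fun π => crossing_eq_crossE n c hc π X
    have hD := lemD hm (c * u) v R0 hR0card
    have hsum : (∑ π ∈ Matchings (n * c),
        ((Matchings (n * c)).card : ℝ)⁻¹ *
          (if (crossing n c hc π X).card = v then ((f ^ v).coeff w) else 0))
        = ((Matchings (n * c)).card : ℝ)⁻¹ * ((f ^ v).coeff w) *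
            (((Matchings (n * c)).filter (fun π => (crossE π R0).card = v)).card : ℝ) := by
      rw [Finset.card_filter]
      push_cast
      rw [Finset.mul_sum]
      apply Finset.sum_congr rfl
      intro π _
      rw [hcrosseq π]
      by_cases h : (crossE π R0).card = v
      · simp only [if_pos h]
        ring
      · simp only [if_neg h]
        ring
    rw [hsum]
    have hDreal : ((((Matchings (n * c)).filter (fun π => (crossE π R0).card = v)).card : ℝ))
        = ((Matchings (n * c)).card : ℝ) *
            (((if v ≤ c * u ∧ (c * u - v) % 2 = 0 then
              2 ^ v * m.choose v * (m - v).choose ((c * u - v) / 2) else 0 : ℕ)) : ℝ)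
          / (((n * c).choose (c * u)) : ℝ) := by
      rw [eq_div_iff (ne_of_gt hchoose)]
      exact_mod_cast hD
    rw [hDreal]
    field_simp
  -- assemble
  have step1 : (∑ π ∈ Matchings (n * c),
      ∑ wt ∈ Fintype.piFinset (fun _ : Fin (n * c) => Finset.Icc 1 q),
        ((Matchings (n * c)).card : ℝ)⁻¹ * (∏ x, μ (wt x)) *
          (AA n c hc s t π wt u v w : ℝ))
      = ∑ π ∈ Matchings (n * c), ∑ X ∈ sepu,
          ((Matchings (n * c)).card : ℝ)⁻¹ *
            (if (crossing n c hc π X).card = v then ((f ^ v).coeff w) else 0) := by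
    apply Finset.sum_congr rfl
    intro π _
    rw [show (∑ wt ∈ Fintype.piFinset (fun _ : Fin (n * c) => Finset.Icc 1 q),
        ((Matchings (n * c)).card : ℝ)⁻¹ * (∏ x, μ (wt x)) *
          (AA n c hc s t π wt u v w : ℝ))
        = ∑ wt ∈ Fintype.piFinset (fun _ : Fin (n * c) => Finset.Icc 1 q), ∑ X ∈ sepu,
            ((Matchings (n * c)).card : ℝ)⁻¹ * (∏ x, μ (wt x)) *
              (if (crossing n c hc π X).card = v then
                (if ∑ x ∈ crossing n c hc π X, wt x = w then (1:ℝ) else 0) else 0) by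
      apply Finset.sum_congr rfl
      intro wt _
      rw [hAA π wt, Finset.mul_sum]]
    rw [Finset.sum_comm]
    apply Finset.sum_congr rfl
    intro X _
    exact hwt π X
  rw [step1, Finset.sum_comm]
  rw [Finset.sum_congr rfl hmatch, Finset.sum_const, nsmul_eq_mul]
  have hcount : (sepu.card : ℝ) = 2 * ((n - 2).choose (u - 1) : ℝ) := by
    rw [hsepu]
    exact_mod_cast countX n u s t hst hu1
  rw [hcount]
  by_cases hcond : v ≤ c * u ∧ (c * u - v) % 2 = 0
  · simp only [if_pos hcond]
    push_cast
    ring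
  · simp only [if_neg hcond]
    push_cast
    ring
end Core
end

section
/- In the configuration model with n vertices having prescribed degrees (n·d_i vertices of degree i, 2m half-edges total), conditioned on a fixed subset S of vertices of size u with total degree h, the probability that a uniformly random perfect matching of the 2m half-edges produces exactly v edges between S and its complement—where these v crossing edges form a prescribed set of v function-node positions—equals 2^v C(m−v,(h−v)/2) / C(2m,h), independent of which size-u set S with total degree h is chosen. -/
open Finset

section glue
variable {α β : Type*} [Fintype α] [Fintype β] [DecidableEq α] [DecidableEq β]

def glueEquiv {p : α → Prop} {q : β → Prop} [DecidablePred p] [DecidablePred q]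
    (e : {a // p a} ≃ {b // q b}) (f : {a // ¬ p a} ≃ {b // ¬ q b}) : α ≃ β :=
  (Equiv.sumCompl p).symm.trans ((e.sumCongr f).trans (Equiv.sumCompl q))

lemma glueEquiv_pos {p : α → Prop} {q : β → Prop} [DecidablePred p] [DecidablePred q]
    (e : {a // p a} ≃ {b // q b}) (f : {a // ¬ p a} ≃ {b // ¬ q b}) (a : α) (h : p a) :
    glueEquiv e f a = e ⟨a, h⟩ := by
  simp [glueEquiv, Equiv.sumCompl_symm_apply_of_pos h]

lemma glueEquiv_neg {p : α → Prop} {q : β → Prop} [DecidablePred p] [DecidablePred q]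
    (e : {a // p a} ≃ {b // q b}) (f : {a // ¬ p a} ≃ {b // ¬ q b}) (a : α) (h : ¬ p a) :
    glueEquiv e f a = f ⟨a, h⟩ := by
  simp [glueEquiv, Equiv.sumCompl_symm_apply_of_neg h]

def restrictionsEquiv (p : α → Prop) (q : β → Prop) [DecidablePred p] [DecidablePred q] :
    {σ : α ≃ β // ∀ a, p a ↔ q (σ a)} ≃
      (({a // p a} ≃ {b // q b}) × ({a // ¬ p a} ≃ {b // ¬ q b})) where
  toFun σ := (σ.1.subtypeEquiv σ.2, σ.1.subtypeEquiv fun a => not_iff_not.mpr (σ.2 a))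
  invFun ef := ⟨glueEquiv ef.1 ef.2, fun a => by
    by_cases h : p a
    · simpa [glueEquiv_pos _ _ a h, h] using (ef.1 ⟨a, h⟩).2
    · have := (ef.2 ⟨a, h⟩).2
      simp only [glueEquiv_neg _ _ a h, h, false_iff]
      exact this⟩
  left_inv σ := by
    apply Subtype.ext
    apply Equiv.ext
    intro a
    by_cases h : p a
    · simp [glueEquiv_pos _ _ a h]
    · simp [glueEquiv_neg _ _ a h]
  right_inv := by
    rintro ⟨e, f⟩
    simp only [Prod.mk.injEq]
    constructor
    · apply Equiv.ext; rintro ⟨a, ha⟩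
      apply Subtype.ext
      simp [glueEquiv_pos _ _ a ha]
    · apply Equiv.ext; rintro ⟨a, ha⟩
      apply Subtype.ext
      simp [glueEquiv_neg _ _ a ha]

lemma card_restricted (p : α → Prop) (q : β → Prop) [DecidablePred p] [DecidablePred q]
    (h1 : Fintype.card {a // p a} = Fintype.card {b // q b})
    (h2 : Fintype.card {a // ¬ p a} = Fintype.card {b // ¬ q b}) :
    (univ.filter (fun σ : α ≃ β => ∀ a, p a ↔ q (σ a))).card
      = (Fintype.card {a // p a}).factorial * (Fintype.card {a // ¬ p a}).factorial := by
  rw [← Fintype.card_subtype]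
  rw [Fintype.card_congr (restrictionsEquiv p q)]
  rw [Fintype.card_prod, Fintype.card_equiv (Fintype.equivOfCardEq h1),
    Fintype.card_equiv (Fintype.equivOfCardEq h2)]

lemma fiber_card (A : Finset α) (B : Finset β) (hAB : A.card = B.card)
    (hcard : Fintype.card α = Fintype.card β) :
    (univ.filter (fun σ : α ≃ β => A.image σ = B)).card
      = (A.card).factorial * (Fintype.card α - A.card).factorial := by
  have key : ∀ σ : α ≃ β, A.image σ = B ↔ ∀ a, a ∈ A ↔ σ a ∈ B := by
    intro σ
    constructor
    · intro hB a
      constructor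
      · intro ha; rw [← hB]; exact mem_image_of_mem _ ha
      · intro hb
        rw [← hB, mem_image] at hb
        obtain ⟨a', ha', he⟩ := hb
        rwa [← σ.injective he]
    · intro hmem
      apply eq_of_subset_of_card_le
      · intro b hb
        rw [mem_image] at hb
        obtain ⟨a, ha, rfl⟩ := hb
        exact (hmem a).1 ha
      · rw [card_image_of_injective _ σ.injective, ← hAB]
  rw [filter_congr (fun σ _ => by rw [key σ])]
  rw [card_restricted (· ∈ A) (· ∈ B)
    (by rw [Fintype.card_coe, Fintype.card_coe, hAB])
    (by rw [Fintype.card_subtype_compl, Fintype.card_subtype_compl,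
        Fintype.card_coe, Fintype.card_coe, hAB, hcard])]
  rw [Fintype.card_coe, Fintype.card_subtype_compl, Fintype.card_coe]

end glue


lemma colcard {m : ℕ} (B : Finset (Fin m × Fin 2)) (j : Fin m) :
    (B.filter (fun p => p.1 = j)).card
      = (if (j, 0) ∈ B then 1 else 0) + (if (j, 1) ∈ B then 1 else 0) := by
  have hset : B.filter (fun p => p.1 = j)
      = ({(j, 0), (j, 1)} : Finset (Fin m × Fin 2)).filter (· ∈ B) := by
    ext ⟨x, y⟩
    simp only [mem_filter, mem_insert, mem_singleton, Prod.mk.injEq]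
    constructor
    · rintro ⟨hB, rfl⟩
      have : y = 0 ∨ y = 1 := by omega
      rcases this with rfl | rfl <;> simp [hB]
    · rintro ⟨⟨rfl, rfl⟩ | ⟨rfl, rfl⟩, hB⟩ <;> exact ⟨hB, rfl⟩
  rw [hset, Finset.card_filter, Finset.sum_pair (by simp)]

lemma total_card {m : ℕ} (B : Finset (Fin m × Fin 2)) :
    B.card = ∑ j : Fin m, (B.filter (fun p => p.1 = j)).card :=
  Finset.card_eq_sum_card_fiberwise (fun x _ => mem_univ _)

lemma mem_build {m : ℕ} (T : Finset (Fin m)) (U : Finset (Fin m)) (g : ↥T → Fin 2)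
    (x : Fin m) (y : Fin 2) :
    ((x, y) ∈ (U ×ˢ (univ : Finset (Fin 2))) ∪
        (univ : Finset ↥T).image (fun t : ↥T => ((t : Fin m), g t)))
      ↔ (x ∈ U ∨ ∃ hx : x ∈ T, g ⟨x, hx⟩ = y) := by
  simp only [mem_union, mem_product, mem_univ, and_true, mem_image, Prod.mk.injEq,
    Subtype.exists, true_and]
  constructor
  · rintro (h | ⟨a, ha, rfl, hy⟩)
    · exact Or.inl h
    · exact Or.inr ⟨ha, hy⟩
  · rintro (h | ⟨hx, hy⟩)
    · exact Or.inl h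
    · exact Or.inr ⟨x, hx, rfl, hy⟩

lemma count_good (m v h : ℕ) (T : Finset (Fin m)) (hT : T.card = v) :
    (univ.filter (fun B : Finset (Fin m × Fin 2) =>
       B.card = h ∧ ∀ j, (j ∈ T ↔ (B.filter (fun p => p.1 = j)).card = 1))).card
    = if v ≤ h ∧ (h - v) % 2 = 0 then 2 ^ v * Nat.choose (m - v) ((h - v) / 2) else 0 := by
  -- structure of a good B
  have struct : ∀ B : Finset (Fin m × Fin 2),
      (B.card = h ∧ ∀ j, (j ∈ T ↔ (B.filter (fun p => p.1 = j)).card = 1)) →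
      h = v + 2 * ((univ \ T).filter (fun j => (j, (0 : Fin 2)) ∈ B)).card := by
    intro B ⟨hcard, hcol⟩
    have hsum : ∑ j ∈ univ \ T, (B.filter (fun p => p.1 = j)).card
        + ∑ j ∈ T, (B.filter (fun p => p.1 = j)).card = h := by
      rw [Finset.sum_sdiff (subset_univ T), ← total_card, hcard]
    have hT1 : ∑ j ∈ T, (B.filter (fun p => p.1 = j)).card = v := by
      rw [Finset.sum_congr rfl (fun j hj => (hcol j).1 hj), Finset.sum_const, hT, smul_eq_mul,
        mul_one]
    have hT2 : ∑ j ∈ univ \ T, (B.filter (fun p => p.1 = j)).card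
        = 2 * ((univ \ T).filter (fun j => (j, (0 : Fin 2)) ∈ B)).card := by
      have : ∀ j ∈ univ \ T, (B.filter (fun p => p.1 = j)).card
          = if (j, (0 : Fin 2)) ∈ B then 2 else 0 := by
        intro j hj
        have hj' : j ∉ T := (mem_sdiff.mp hj).2
        have hne : (B.filter (fun p => p.1 = j)).card ≠ 1 := fun hc => hj' ((hcol j).2 hc)
        rw [colcard] at hne ⊢
        by_cases h0 : (j, (0 : Fin 2)) ∈ B <;> by_cases h1 : (j, (1 : Fin 2)) ∈ B <;>
          simp [h0, h1] at hne ⊢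
      rw [Finset.sum_congr rfl this, ← Finset.sum_filter, Finset.sum_const, smul_eq_mul,
        mul_comm]
    omega
  by_cases hc : v ≤ h ∧ (h - v) % 2 = 0
  · rw [if_pos hc]
    obtain ⟨hvh, hpar⟩ := hc
    have h2k : 2 * ((h - v) / 2) = h - v := by omega
    have key := Finset.card_bij'
      (s := univ.filter (fun B : Finset (Fin m × Fin 2) =>
         B.card = h ∧ ∀ j, (j ∈ T ↔ (B.filter (fun p => p.1 = j)).card = 1)))
      (t := ((univ \ T).powersetCard ((h - v) / 2)) ×ˢ (univ : Finset (↥T → Fin 2)))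
      (fun B _ => (((univ \ T).filter (fun j => (j, (0 : Fin 2)) ∈ B)),
        fun t : ↥T => if ((t : Fin m), (0 : Fin 2)) ∈ B then 0 else 1))
      (fun Ug _ => (Ug.1 ×ˢ (univ : Finset (Fin 2))) ∪
        (univ : Finset ↥T).image (fun t : ↥T => ((t : Fin m), Ug.2 t)))
      ?_ ?_ ?_ ?_
    · rw [key, card_product, card_powersetCard, card_sdiff_of_subset (subset_univ T), card_univ,
        Fintype.card_fin, hT, card_univ, Fintype.card_fun, Fintype.card_coe, hT,
        Fintype.card_fin, mul_comm]
    · -- i lands in t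
      intro B hB
      rw [mem_filter] at hB
      have hst := struct B hB.2
      rw [mem_product, mem_powersetCard]
      refine ⟨⟨filter_subset _ _, ?_⟩, mem_univ _⟩
      show ((univ \ T).filter (fun j => (j, (0 : Fin 2)) ∈ B)).card = (h - v) / 2
      omega
    · -- j lands in s
      rintro ⟨U, g⟩ hUg
      rw [mem_product, mem_powersetCard] at hUg
      obtain ⟨⟨hUsub, hUcard⟩, -⟩ := hUg
      have hUT : ∀ x ∈ U, x ∉ T := fun x hx => (mem_sdiff.mp (hUsub hx)).2
      dsimp only
      set D := (U ×ˢ (univ : Finset (Fin 2))) ∪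
        (univ : Finset ↥T).image (fun t : ↥T => ((t : Fin m), g t)) with hD
      have hcols : ∀ j, (j ∈ T ↔ (D.filter (fun p => p.1 = j)).card = 1) := by
        intro j
        have m0 := mem_build T U g j 0
        have m1 := mem_build T U g j 1
        rw [← hD] at m0 m1
        rw [colcard]
        by_cases hjT : j ∈ T
        · have hjU : j ∉ U := fun hU => hUT j hU hjT
          have hg : g ⟨j, hjT⟩ = 0 ∨ g ⟨j, hjT⟩ = 1 := by omega
          rcases hg with hg | hg <;>
            simp [m0, m1, hjU, hjT, hg]
        · have hU0 : ((j, (0 : Fin 2)) ∈ D) ↔ j ∈ U := by rw [m0]; simp [hjT]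
          have hU1 : ((j, (1 : Fin 2)) ∈ D) ↔ j ∈ U := by rw [m1]; simp [hjT]
          by_cases hjU : j ∈ U <;> simp [hU0, hU1, hjU, hjT]
      rw [mem_filter]
      refine ⟨mem_univ _, ?_, hcols⟩
      have hdisj : Disjoint (U ×ˢ (univ : Finset (Fin 2)))
          ((univ : Finset ↥T).image (fun t : ↥T => ((t : Fin m), g t))) := by
        rw [Finset.disjoint_left]
        rintro ⟨x, y⟩ hx hy
        rw [mem_product] at hx
        rw [mem_image] at hy
        obtain ⟨t, -, ht⟩ := hy
        cases ht
        exact hUT _ hx.1 t.2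
      rw [hD, card_union_of_disjoint hdisj, card_product,
        card_image_of_injective _ (fun a b hab => Subtype.ext (congrArg Prod.fst hab))]
      simp only [card_univ, Fintype.card_fin, Fintype.card_coe, hT, hUcard]
      omega
    · -- left inverse
      intro B hB
      rw [mem_filter] at hB
      obtain ⟨-, hcard, hcol⟩ := hB
      dsimp only
      ext ⟨x, y⟩
      rw [mem_build]
      have hy : y = 0 ∨ y = 1 := by omega
      by_cases hxT : x ∈ T
      · have hc1 : (B.filter (fun p => p.1 = x)).card = 1 := (hcol x).1 hxT
        rw [colcard] at hc1
        have hxU : x ∉ (univ \ T).filter (fun j => (j, (0 : Fin 2)) ∈ B) := by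
          simp [hxT]
        by_cases h0 : (x, (0 : Fin 2)) ∈ B <;> by_cases h1 : (x, (1 : Fin 2)) ∈ B <;>
          rcases hy with rfl | rfl <;>
          simp [hxU, hxT, h0, h1] at hc1 ⊢ <;> omega
      · have hcn : (B.filter (fun p => p.1 = x)).card ≠ 1 := fun hc => hxT ((hcol x).2 hc)
        rw [colcard] at hcn
        have hxU : x ∈ (univ \ T).filter (fun j => (j, (0 : Fin 2)) ∈ B) ↔
            (x, (0 : Fin 2)) ∈ B := by simp [hxT]
        by_cases h0 : (x, (0 : Fin 2)) ∈ B <;> by_cases h1 : (x, (1 : Fin 2)) ∈ B <;>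
          rcases hy with rfl | rfl <;>
          simp [hxU, hxT, h0, h1] at hcn ⊢
    · -- right inverse
      rintro ⟨U, g⟩ hUg
      rw [mem_product, mem_powersetCard] at hUg
      obtain ⟨⟨hUsub, hUcard⟩, -⟩ := hUg
      have hUT : ∀ x ∈ U, x ∉ T := fun x hx => (mem_sdiff.mp (hUsub hx)).2
      dsimp only
      refine Prod.ext ?_ ?_
      · ext x
        rw [mem_filter]
        constructor
        · rintro ⟨hxs, hxD⟩
          rw [mem_build] at hxD
          rcases hxD with hxU | ⟨hxT, -⟩
          · exact hxU
          · exact absurd hxT (mem_sdiff.mp hxs).2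
        · intro hxU
          exact ⟨hUsub hxU, (mem_build T U g x 0).mpr (Or.inl hxU)⟩
      · funext t
        dsimp only
        have htU : (t : Fin m) ∉ U := fun hU => hUT _ hU t.2
        have hm : (((t : Fin m), (0 : Fin 2)) ∈ (U ×ˢ (univ : Finset (Fin 2))) ∪
            (univ : Finset ↥T).image (fun t : ↥T => ((t : Fin m), g t))) ↔ g t = 0 := by
          rw [mem_build]
          simp [htU, t.2]
        by_cases hg : g t = 0
        · rw [if_pos (hm.mpr hg)]
          exact hg.symm
        · have h1 : g t = 1 := by omega
          rw [if_neg (fun hmem => hg (hm.mp hmem))]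
          exact h1.symm
  · rw [if_neg hc]
    rw [Finset.card_eq_zero, Finset.filter_eq_empty_iff]
    intro B _ hB
    have := struct B hB
    omega


/-- Configuration model, conditioned on the active half-edges. There are `2m`
half-edges, `h` of which (the set `A`, the half-edges of a size-`u` vertex set
`S` of total degree `h`) are active. A uniformly random assignment
`σ : half-edges ≃ endpoint slots` (slots `Fin m × Fin 2`, one pair per function
node/edge) is drawn. The probability that the set of crossing edges (edges with
exactly one active endpoint) is exactly a prescribed set `T` of `v` function
nodes equals `2^v C(m−v,(h−v)/2) / C(2m,h)` (with `C` vanishing on non-integer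
or out-of-range arguments), independently of the choice of `A`. -/
theorem stmt16 (m v h : ℕ) (hv : v ≤ m) (hh : h ≤ 2 * m)
    (T : Finset (Fin m)) (hT : T.card = v)
    (A : Finset (Fin (2 * m))) (hA : A.card = h) :
    ((univ.filter (fun σ : Fin (2 * m) ≃ (Fin m × Fin 2) =>
        ∀ j : Fin m, (j ∈ T ↔ (A.filter (fun x => (σ x).1 = j)).card = 1))).card : ℝ)
      / (Fintype.card (Fin (2 * m) ≃ (Fin m × Fin 2)) : ℝ)
    = (if v ≤ h ∧ (h - v) % 2 = 0 then
        (2 ^ v * Nat.choose (m - v) ((h - v) / 2) : ℝ) else 0)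
      / (Nat.choose (2 * m) h : ℝ) := by
  have hcard : Fintype.card (Fin (2 * m)) = Fintype.card (Fin m × Fin 2) := by
    simp [mul_comm]
  have hden : Fintype.card (Fin (2 * m) ≃ (Fin m × Fin 2)) = (2 * m).factorial := by
    rw [Fintype.card_equiv (Fintype.equivOfCardEq hcard), Fintype.card_fin]
  have trans : ∀ (σ : Fin (2 * m) ≃ (Fin m × Fin 2)) (j : Fin m),
      (A.filter (fun x => (σ x).1 = j)).card
        = ((A.image σ).filter (fun p => p.1 = j)).card := by
    intro σ j
    rw [Finset.filter_image, card_image_of_injective _ σ.injective]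
  have hnum : (univ.filter (fun σ : Fin (2 * m) ≃ (Fin m × Fin 2) =>
        ∀ j : Fin m, (j ∈ T ↔ (A.filter (fun x => (σ x).1 = j)).card = 1))).card
      = (univ.filter (fun B : Finset (Fin m × Fin 2) =>
          B.card = h ∧ ∀ j, (j ∈ T ↔ (B.filter (fun p => p.1 = j)).card = 1))).card
        * (h.factorial * (2 * m - h).factorial) := by
    rw [Finset.card_eq_sum_card_fiberwise (f := fun σ : Fin (2 * m) ≃ (Fin m × Fin 2) => A.image σ)
      (t := univ.filter (fun B : Finset (Fin m × Fin 2) =>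
          B.card = h ∧ ∀ j, (j ∈ T ↔ (B.filter (fun p => p.1 = j)).card = 1)))
      (fun σ hσ => by
        rw [Finset.mem_coe, mem_filter] at hσ ⊢
        refine ⟨mem_univ _, ?_, fun j => ?_⟩
        · rw [card_image_of_injective _ σ.injective, hA]
        · rw [← trans σ j]; exact hσ.2 j)]
    rw [Finset.sum_congr rfl (fun B hB => ?_), Finset.sum_const, smul_eq_mul]
    rw [mem_filter] at hB
    have hfib : (univ.filter (fun σ : Fin (2 * m) ≃ (Fin m × Fin 2) =>
        ∀ j : Fin m, (j ∈ T ↔ (A.filter (fun x => (σ x).1 = j)).card = 1))).filter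
          (fun σ : Fin (2 * m) ≃ (Fin m × Fin 2) => A.image σ = B)
        = univ.filter (fun σ : Fin (2 * m) ≃ (Fin m × Fin 2) => A.image σ = B) := by
      ext σ
      simp only [mem_filter, mem_univ, true_and]
      constructor
      · exact And.right
      · intro hB'
        refine ⟨fun j => ?_, hB'⟩
        rw [trans σ j, hB']
        exact hB.2.2 j
    rw [hfib, fiber_card A B (by rw [hA, hB.2.1]) hcard, hA, Fintype.card_fin]
  rw [hnum, hden, count_good m v h T hT]
  by_cases hcnd : v ≤ h ∧ (h - v) % 2 = 0
  · rw [if_pos hcnd, if_pos hcnd]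
    have hfact := Nat.choose_mul_factorial_mul_factorial hh
    have hden2 : ((2 * m).factorial : ℝ)
        = (Nat.choose (2 * m) h : ℝ)
          * ((h.factorial : ℝ) * ((2 * m - h).factorial : ℝ)) := by
      rw [← hfact]; push_cast; ring
    have hX : ((h.factorial : ℝ) * ((2 * m - h).factorial : ℝ)) ≠ 0 := by positivity
    push_cast
    rw [hden2, mul_div_mul_right _ _ hX]
  · rw [if_neg hcnd, if_neg hcnd]
    simp
end
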